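/- arXiv:2508.11623 — 3 statements merged into one kernel-verified Lean document; each statement's English description precedes it below -/
import Mathlib

section
/- Let (X,d) be a Q-metric space over a continuous quantale. For every A ⊆ X, the closure of A in the dual open ball topology equals the intersection over all δ ≪ 1 of B_R(A, δ). -/
def wayBelow {Q : Type*} [CompleteLattice Q] (x y : Q) : Prop :=
  ∀ D : Set Q, D.Nonempty → DirectedOn (· ≤ ·) D → y ≤ sSup D → ∃ d ∈ D, x ≤ d

def ContinuousLattice (Q : Type*) [CompleteLattice Q] : Prop :=
  ∀ y : Q, y = sSup {x : Q | wayBelow x y}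

/-- The set of points belonging to `A` with precision greater than `δ`. -/
def BR {Q : Type*} [CompleteLattice Q] {X : Type*} (d : X → X → Q) (A : Set X) (δ : Q) :
    Set X := {y : X | ∃ x ∈ A, wayBelow δ (d x y)}

/-- Dual open ball. -/
def dualBall {Q : Type*} [CompleteLattice Q] {X : Type*} (d : X → X → Q) (x : X) (δ : Q) :
    Set X := {y : X | wayBelow δ (d y x)}

/-- The dual open ball topology. -/
def dualBallTopology {Q : Type*} [Monoid Q] [CompleteLattice Q] {X : Type*}
    (d : X → X → Q) : TopologicalSpace X :=
  TopologicalSpace.generateFrom {B : Set X | ∃ x δ, wayBelow δ (1 : Q) ∧ B = dualBall d x δ}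

section Aux

variable {Q : Type*} [CompleteLattice Q]

lemma wayBelow_le {u y : Q} (h : wayBelow u y) : u ≤ y := by
  obtain ⟨d, hd, hud⟩ := h {y} ⟨y, rfl⟩ (directedOn_singleton y) (by simp)
  simpa [Set.mem_singleton_iff.1 hd] using hud

lemma wayBelow_bot {y : Q} : wayBelow ⊥ y := by
  intro D hD _ _
  obtain ⟨a, ha⟩ := hD
  exact ⟨a, ha, bot_le⟩

lemma wayBelow_mono_left {x u y : Q} (hx : x ≤ u) (h : wayBelow u y) : wayBelow x y := by
  intro D h1 h2 h3
  obtain ⟨a, ha, hua⟩ := h D h1 h2 h3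
  exact ⟨a, ha, hx.trans hua⟩

lemma wayBelow_mono_right {u y z : Q} (h : wayBelow u y) (hyz : y ≤ z) : wayBelow u z :=
  fun D h1 h2 h3 => h D h1 h2 (hyz.trans h3)

lemma wayBelow_sup {u v y : Q} (hu : wayBelow u y) (hv : wayBelow v y) :
    wayBelow (u ⊔ v) y := by
  intro D h1 h2 h3
  obtain ⟨a, ha, hua⟩ := hu D h1 h2 h3
  obtain ⟨b, hb, hvb⟩ := hv D h1 h2 h3
  obtain ⟨c, hc, hac, hbc⟩ := h2 a ha b hb
  exact ⟨c, hc, sup_le (hua.trans hac) (hvb.trans hbc)⟩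

lemma wayBelow_interpolate (hcont : ContinuousLattice Q) {δ c : Q} (h : wayBelow δ c) :
    ∃ μ, wayBelow δ μ ∧ wayBelow μ c := by
  set S : Set Q := {a | ∃ μ, wayBelow a μ ∧ wayBelow μ c} with hS
  have hne : S.Nonempty := ⟨⊥, ⊥, wayBelow_bot, wayBelow_bot⟩
  have hdir : DirectedOn (· ≤ ·) S := by
    rintro a ⟨μ1, ha1, ha2⟩ b ⟨μ2, hb1, hb2⟩
    refine ⟨a ⊔ b, ⟨μ1 ⊔ μ2, wayBelow_sup (wayBelow_mono_right ha1 le_sup_left)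
      (wayBelow_mono_right hb1 le_sup_right), wayBelow_sup ha2 hb2⟩, le_sup_left, le_sup_right⟩
  have hle : c ≤ sSup S := by
    conv_lhs => rw [hcont c]
    refine sSup_le fun μ hμ => ?_
    conv_lhs => rw [hcont μ]
    exact sSup_le fun a ha => le_sSup ⟨μ, ha, hμ⟩
  obtain ⟨a, ⟨μ, haμ, hμc⟩, hδa⟩ := h S hne hdir hle
  exact ⟨μ, wayBelow_mono_left hδa haμ, hμc⟩

end Aux

section Aux2

variable {Q : Type*} [Monoid Q] [CompleteLattice Q] [IsQuantale Q]

/-- If `δ ≪ c` then there is `u ≪ 1` with `δ ≪ u * c`. -/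
lemma wayBelow_mul_split (hcont : ContinuousLattice Q) {δ c : Q} (h : wayBelow δ c) :
    ∃ u, wayBelow u (1 : Q) ∧ wayBelow δ (u * c) := by
  obtain ⟨μ, hδμ, hμc⟩ := wayBelow_interpolate hcont h
  set S : Set Q := (fun u => u * c) '' {u | wayBelow u (1 : Q)} with hS
  have hne : S.Nonempty := ⟨⊥ * c, ⊥, wayBelow_bot, rfl⟩
  have hdir : DirectedOn (· ≤ ·) S := by
    rintro _ ⟨u, hu, rfl⟩ _ ⟨v, hv, rfl⟩
    exact ⟨(u ⊔ v) * c, ⟨u ⊔ v, wayBelow_sup hu hv, rfl⟩,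
      mul_le_mul_left le_sup_left c, mul_le_mul_left le_sup_right c⟩
  have hle : c ≤ sSup S := by
    have h1 : (1 : Q) * c = sSup S := by
      conv_lhs => rw [hcont 1]
      rw [sSup_mul_distrib, hS, sSup_image]
    exact le_of_eq ((one_mul c).symm.trans h1)
  obtain ⟨_, ⟨u, hu, rfl⟩, hμu⟩ := hμc S hne hdir hle
  exact ⟨u, hu, wayBelow_mono_right hδμ hμu⟩

end Aux2

theorem dual_closure_eq_iInter_BR {Q : Type*} [Monoid Q] [CompleteLattice Q] [IsQuantale Q]
    (hcont : ContinuousLattice Q) {X : Type*} (d : X → X → Q)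
    (hrefl : ∀ x : X, (1 : Q) ≤ d x x)
    (htri : ∀ x y z : X, d x y * d y z ≤ d x z) (A : Set X) :
    @closure X (dualBallTopology d) A =
      ⋂ δ ∈ {δ : Q | wayBelow δ (1 : Q)}, BR d A δ := by
  letI := dualBallTopology d
  ext y
  simp only [Set.mem_iInter, Set.mem_setOf_eq]
  constructor
  · intro hy δ hδ
    have hopen : IsOpen (dualBall d y δ) :=
      TopologicalSpace.GenerateOpen.basic _ ⟨y, δ, hδ, rfl⟩
    have hyb : y ∈ dualBall d y δ := wayBelow_mono_right hδ (hrefl y)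
    obtain ⟨x, hx1, hx2⟩ := mem_closure_iff.1 hy _ hopen hyb
    exact ⟨x, hx2, hx1⟩
  · intro hy
    rw [mem_closure_iff]
    intro o ho hyo
    -- strengthened claim: every open set containing y contains a left-ball around y
    have key : ∀ o : Set X, IsOpen o → y ∈ o →
        ∃ u, wayBelow u (1 : Q) ∧ ∀ x, wayBelow u (d x y) → x ∈ o := by
      intro o ho
      induction ho with
      | basic B hB =>
        obtain ⟨c, δ, hδ1, rfl⟩ := hB
        intro hyB
        obtain ⟨u, hu1, hu2⟩ := wayBelow_mul_split hcont hyB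
        refine ⟨u, hu1, fun x hx => ?_⟩
        have h1 : u * d y c ≤ d x c :=
          le_trans (mul_le_mul_left (wayBelow_le hx) _) (htri x y c)
        exact wayBelow_mono_right hu2 h1
      | univ => exact fun _ => ⟨⊥, wayBelow_bot, fun _ _ => trivial⟩
      | inter s t _ _ ihs iht =>
        intro hyst
        obtain ⟨u, hu1, hu2⟩ := ihs hyst.1
        obtain ⟨v, hv1, hv2⟩ := iht hyst.2
        exact ⟨u ⊔ v, wayBelow_sup hu1 hv1, fun x hx =>
          ⟨hu2 x (wayBelow_mono_left le_sup_left hx),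
           hv2 x (wayBelow_mono_left le_sup_right hx)⟩⟩
      | sUnion S hS ih =>
        intro hyS
        obtain ⟨t, ht, hyt⟩ := hyS
        obtain ⟨u, hu1, hu2⟩ := ih t ht hyt
        exact ⟨u, hu1, fun x hx => ⟨t, ht, hu2 x hx⟩⟩
    obtain ⟨u, hu1, hu2⟩ := key o ho hyo
    obtain ⟨x, hxA, hxu⟩ := hy u hu1
    exact ⟨x, hu2 x hxu, hxA⟩
end

section
/- Let (X,d) be a Q-metric space over a continuous quantale and let cl°(A) denote the closure of A in the dual open ball topology. Then B_R(cl°(A), δ) = B_R(A, δ) for every A ⊆ X and δ ≪ 1. -/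
/-- Closure of  in the dual open ball topology. -/
def dualClosure {Q : Type*} [Monoid Q] [CompleteLattice Q] {X : Type*} (d : X → X → Q)
    (A : Set X) : Set X :=
  {y : X | ∀ ε : Q, wayBelow ε (1 : Q) → ∃ x ∈ A, wayBelow ε (d x y)}

section aux
variable {Q : Type*} [CompleteLattice Q]

lemma wayBelow.le {x y : Q} (h : wayBelow x y) : x ≤ y := by
  obtain ⟨d, hd, hxd⟩ := h {y} ⟨y, rfl⟩ (directedOn_singleton _)
    (le_sSup rfl)
  rwa [Set.mem_singleton_iff.1 hd] at hxd

lemma wayBelow.mono {x' x y y' : Q} (hx : x' ≤ x) (h : wayBelow x y) (hy : y ≤ y') :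
    wayBelow x' y' := fun D hne hdir hle => by
  obtain ⟨e, he, hxe⟩ := h D hne hdir (hy.trans hle)
  exact ⟨e, he, hx.trans hxe⟩

lemma bot_wayBelow (y : Q) : wayBelow ⊥ y := fun D hne _ _ =>
  ⟨hne.choose, hne.choose_spec, bot_le⟩

lemma wayBelow.sup {a b y : Q} (ha : wayBelow a y) (hb : wayBelow b y) :
    wayBelow (a ⊔ b) y := fun D hne hdir hle => by
  obtain ⟨e, he, hae⟩ := ha D hne hdir hle
  obtain ⟨f, hf, hbf⟩ := hb D hne hdir hle
  obtain ⟨g, hg, heg, hfg⟩ := hdir e he f hf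
  exact ⟨g, hg, sup_le (hae.trans heg) (hbf.trans hfg)⟩

lemma wayBelowSet_directed (y : Q) : DirectedOn (· ≤ ·) {x : Q | wayBelow x y} :=
  fun a ha b hb => ⟨a ⊔ b, ha.sup hb, le_sup_left, le_sup_right⟩

lemma wayBelowSet_nonempty (y : Q) : Set.Nonempty {x : Q | wayBelow x y} :=
  ⟨⊥, bot_wayBelow y⟩

/-- Interpolation in a continuous lattice. -/
lemma wayBelow.interpolate (hcont : ContinuousLattice Q) {a b : Q} (h : wayBelow a b) :
    ∃ c, wayBelow a c ∧ wayBelow c b := by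
  set D : Set Q := {u | ∃ c, wayBelow u c ∧ wayBelow c b} with hD
  have hne : D.Nonempty := ⟨⊥, ⊥, bot_wayBelow ⊥, bot_wayBelow b⟩
  have hdir : DirectedOn (· ≤ ·) D := by
    rintro u1 ⟨c1, hu1, hc1⟩ u2 ⟨c2, hu2, hc2⟩
    exact ⟨u1 ⊔ u2, ⟨c1 ⊔ c2,
      (hu1.mono le_rfl le_sup_left).sup (hu2.mono le_rfl le_sup_right),
      hc1.sup hc2⟩, le_sup_left, le_sup_right⟩
  have hle : b ≤ sSup D := by
    conv_lhs => rw [hcont b]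
    apply sSup_le
    intro c hc
    conv_lhs => rw [hcont c]
    exact sSup_le fun u hu => le_sSup ⟨c, hu, hc⟩
  obtain ⟨u, ⟨c, huc, hcb⟩, hau⟩ := h D hne hdir hle
  exact ⟨c, huc.mono hau le_rfl, hcb⟩

end aux

theorem BR_dualClosure {Q : Type*} [Monoid Q] [CompleteLattice Q] [IsQuantale Q]
    (hcont : ContinuousLattice Q) {X : Type*} (d : X → X → Q)
    (hrefl : ∀ x : X, (1 : Q) ≤ d x x)
    (htri : ∀ x y z : X, d x y * d y z ≤ d x z)
    (A : Set X) {δ : Q} (hδ : wayBelow δ (1 : Q)) :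
    BR d (dualClosure d A) δ = BR d A δ := by
  apply Set.Subset.antisymm
  · rintro y ⟨z, hz, hzy⟩
    -- interpolate: δ ≪ c ≪ d z y
    obtain ⟨c, hδc, hc⟩ := hzy.interpolate hcont
    -- d z y ≤ sSup {ε * d z y | ε ≪ 1}
    set D : Set Q := (fun ε => ε * d z y) '' {ε : Q | wayBelow ε (1 : Q)} with hDdef
    have hDne : D.Nonempty := (wayBelowSet_nonempty 1).image _
    have hDdir : DirectedOn (· ≤ ·) D := by
      rintro _ ⟨e1, he1, rfl⟩ _ ⟨e2, he2, rfl⟩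
      obtain ⟨e, he, h1, h2⟩ := wayBelowSet_directed (1 : Q) e1 he1 e2 he2
      exact ⟨e * d z y, ⟨e, he, rfl⟩, mul_le_mul_left h1 _, mul_le_mul_left h2 _⟩
    have hle : d z y ≤ sSup D := by
      have : d z y = sSup {ε : Q | wayBelow ε (1 : Q)} * d z y := by
        rw [← hcont 1, one_mul]
      rw [this, sSup_mul_distrib]
      exact le_of_eq (by rw [hDdef, sSup_image])
    obtain ⟨_, ⟨ε, hε, rfl⟩, hcε⟩ := hc D hDne hDdir hle
    -- ε ≪ 1, so get x ∈ A with ε ≪ d x z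
    obtain ⟨x, hx, hεx⟩ := hz ε hε
    refine ⟨x, hx, hδc.mono le_rfl ?_⟩
    calc c ≤ ε * d z y := hcε
      _ ≤ d x z * d z y := mul_le_mul_left hεx.le _
      _ ≤ d x y := htri x z y
  · rintro y ⟨x, hx, hxy⟩
    exact ⟨x, fun ε hε => ⟨x, hx, hε.mono le_rfl (hrefl x)⟩, hxy⟩
end

section
/- Let (X,d) be a Q-metric space over a prime-continuous quantale Q. The topology generated by the balls B_T(x,δ) = {y | δ ⋘ d(x,y)} (using the totally-below relation) coincides with the topology generated by the balls B(x,δ) = {y | δ ≪ d(x,y)} (using the way-below relation), where in both cases δ ranges over elements with δ ⋘ 1 (respectively δ ≪ 1). -/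
def totallyBelow {Q : Type*} [CompleteLattice Q] (x y : Q) : Prop :=
  ∀ D : Set Q, y ≤ sSup D → ∃ d ∈ D, x ≤ d

section Helpers

variable {Q : Type*} [CompleteLattice Q]

theorem tb_le {a b : Q} (h : totallyBelow a b) : a ≤ b := by
  obtain ⟨d, hd, hle⟩ := h {b} (by simp)
  simpa using hd ▸ hle

theorem le_tb {a b c : Q} (hab : a ≤ b) (h : totallyBelow b c) : totallyBelow a c :=
  fun D hD => let ⟨d, hd, hle⟩ := h D hD; ⟨d, hd, hab.trans hle⟩

theorem tb_mono_right {a b c : Q} (h : totallyBelow a b) (hbc : b ≤ c) : totallyBelow a c :=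
  fun D hD => h D (hbc.trans hD)

theorem tb_wb {a b : Q} (h : totallyBelow a b) : wayBelow a b :=
  fun D _ _ hD => h D hD

theorem wb_le {a b : Q} (h : wayBelow a b) : a ≤ b := by
  obtain ⟨d, hd, hle⟩ := h {b} (by simp) (directedOn_singleton b) (by simp)
  simpa using hd ▸ hle

theorem le_wb {a b c : Q} (hab : a ≤ b) (h : wayBelow b c) : wayBelow a c :=
  fun D hne hdir hD => let ⟨d, hd, hle⟩ := h D hne hdir hD; ⟨d, hd, hab.trans hle⟩

theorem wb_mono_right {a b c : Q} (h : wayBelow a b) (hbc : b ≤ c) : wayBelow a c :=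
  fun D hne hdir hD => h D hne hdir (hbc.trans hD)

theorem wb_bot {b : Q} : wayBelow (⊥ : Q) b :=
  fun _ hne _ _ => let ⟨d, hd⟩ := hne; ⟨d, hd, bot_le⟩

theorem wb_sup {a b c : Q} (ha : wayBelow a c) (hb : wayBelow b c) : wayBelow (a ⊔ b) c := by
  intro D hne hdir hD
  obtain ⟨d₁, hd₁, h₁⟩ := ha D hne hdir hD
  obtain ⟨d₂, hd₂, h₂⟩ := hb D hne hdir hD
  obtain ⟨e, he, he₁, he₂⟩ := hdir d₁ hd₁ d₂ hd₂
  exact ⟨e, he, sup_le (h₁.trans he₁) (h₂.trans he₂)⟩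

theorem wb_finsetSup {c : Q} (F : Finset Q) (h : ∀ e ∈ F, wayBelow e c) :
    wayBelow (F.sup id) c := by
  classical
  induction F using Finset.induction_on with
  | empty => simpa using wb_bot
  | @insert a s _ ih =>
    rw [Finset.sup_insert]
    exact wb_sup (h a (Finset.mem_insert_self a s))
      (ih fun e he => h e (Finset.mem_insert_of_mem he))

/-- The finite-join closure of a set: directed, nonempty, with at least the same sup. -/
theorem finsetSup_closure (S : Set Q) :
    ∃ T : Set Q, T.Nonempty ∧ DirectedOn (· ≤ ·) T ∧ sSup S ≤ sSup T ∧
      ∀ t ∈ T, ∃ F : Finset Q, ↑F ⊆ S ∧ t = F.sup id := by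
  classical
  refine ⟨{t | ∃ F : Finset Q, (↑F : Set Q) ⊆ S ∧ t = F.sup id}, ⟨⊥, ∅, by simp⟩, ?_, ?_, fun t ht => ht⟩
  · rintro _ ⟨F₁, hF₁, rfl⟩ _ ⟨F₂, hF₂, rfl⟩
    refine ⟨(F₁ ∪ F₂).sup id, ⟨F₁ ∪ F₂, by
      push_cast
      exact Set.union_subset hF₁ hF₂, rfl⟩, ?_, ?_⟩
    · exact Finset.sup_mono (Finset.subset_union_left)
    · exact Finset.sup_mono (Finset.subset_union_right)
  · refine sSup_le fun s hs => le_sSup_of_le (b := s) ⟨{s}, by simpa using hs, by simp⟩ le_rfl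

end Helpers

section QHelpers

variable {Q : Type*} [Monoid Q] [CompleteLattice Q] [IsQuantale Q]

/-- Key decomposition: `b ≤ sSup {e | ∃ ε ⋘ 1, e ⋘ b * ε}`. -/
theorem le_sSup_base (hpc : ∀ y : Q, y = sSup {x : Q | totallyBelow x y}) (b : Q) :
    b ≤ sSup {e : Q | ∃ ε, totallyBelow ε 1 ∧ totallyBelow e (b * ε)} := by
  calc b = b * sSup {ε : Q | totallyBelow ε (1 : Q)} := by rw [← hpc 1, mul_one]
    _ = ⨆ ε ∈ {ε : Q | totallyBelow ε (1 : Q)}, b * ε := mul_sSup_distrib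
    _ ≤ sSup {e : Q | ∃ ε, totallyBelow ε 1 ∧ totallyBelow e (b * ε)} := by
        refine iSup_le fun ε => iSup_le fun hε => ?_
        calc b * ε = sSup {e : Q | totallyBelow e (b * ε)} := hpc _
          _ ≤ sSup {e : Q | ∃ ε, totallyBelow ε 1 ∧ totallyBelow e (b * ε)} :=
              sSup_le_sSup fun e he => ⟨ε, hε, he⟩

/-- Claim A key: if `δ ⋘ b` then `δ ⋘ b * ε` for some `ε ⋘ 1`. -/
theorem tb_key (hpc : ∀ y : Q, y = sSup {x : Q | totallyBelow x y}) {δ b : Q}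
    (hδ : totallyBelow δ b) :
    ∃ ε, totallyBelow ε 1 ∧ totallyBelow δ (b * ε) := by
  obtain ⟨e, ⟨ε, hε, he⟩, hle⟩ := hδ _ (le_sSup_base hpc b)
  exact ⟨ε, hε, le_tb hle he⟩

/-- Claim B key: if `δ ≪ b` then `δ ≪ b * F.sup id` for some finite `F` of elements `⋘ 1`. -/
theorem wb_key (hpc : ∀ y : Q, y = sSup {x : Q | totallyBelow x y}) {δ b : Q}
    (hδ : wayBelow δ b) :
    ∃ F : Finset Q, (∀ ε ∈ F, totallyBelow ε 1) ∧ wayBelow δ (b * F.sup id) := by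
  classical
  set Base : Set Q := {e : Q | ∃ ε, totallyBelow ε 1 ∧ totallyBelow e (b * ε)} with hBase
  obtain ⟨T, hTne, hTdir, hTle, hTmem⟩ := finsetSup_closure Base
  obtain ⟨t, ht, hδt⟩ := hδ T hTne hTdir ((le_sSup_base hpc b).trans hTle)
  obtain ⟨G, hGsub, rfl⟩ := hTmem t ht
  -- choice function for witnesses
  have hwit : ∀ e ∈ G, ∃ ε, totallyBelow ε 1 ∧ totallyBelow e (b * ε) := fun e he => hGsub he
  set f : Q → Q := fun e =>
    if h : ∃ ε, totallyBelow ε 1 ∧ totallyBelow e (b * ε) then h.choose else ⊥ with hf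
  refine ⟨G.image f, ?_, ?_⟩
  · intro ε hε
    obtain ⟨e, he, rfl⟩ := Finset.mem_image.mp hε
    have h := hwit e he
    simp only [hf, dif_pos h]
    exact h.choose_spec.1
  · refine le_wb hδt (wb_finsetSup G fun e he => ?_)
    have h := hwit e he
    have h2 : totallyBelow e (b * f e) := by
      simp only [hf, dif_pos h]
      exact h.choose_spec.2
    have h3 : f e ≤ (G.image f).sup id := Finset.le_sup (f := id) (Finset.mem_image_of_mem f he)
    exact tb_wb (tb_mono_right h2 (mul_le_mul_right h3 b))

end QHelpers

theorem generateOpen_biInter {X Q : Type*} (S : Set (Set X)) (F : Finset Q) (B : Q → Set X)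
    (h : ∀ ε ∈ F, B ε ∈ S) : TopologicalSpace.GenerateOpen S (⋂ ε ∈ F, B ε) := by
  classical
  induction F using Finset.induction_on with
  | empty => simpa using TopologicalSpace.GenerateOpen.univ
  | @insert a s _ ih =>
    rw [Finset.set_biInter_insert]
    exact TopologicalSpace.GenerateOpen.inter _ _
      (TopologicalSpace.GenerateOpen.basic _ (h a (Finset.mem_insert_self a s)))
      (ih fun ε hε => h ε (Finset.mem_insert_of_mem hε))

theorem generateOpen_of_nbhd {X : Type*} (S : Set (Set X)) (s : Set X)
    (h : ∀ y ∈ s, ∃ u, TopologicalSpace.GenerateOpen S u ∧ y ∈ u ∧ u ⊆ s) :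
    TopologicalSpace.GenerateOpen S s := by
  have hs : s = ⋃₀ {u | TopologicalSpace.GenerateOpen S u ∧ u ⊆ s} := by
    apply Set.Subset.antisymm
    · intro y hy
      obtain ⟨u, hu, hyu, hus⟩ := h y hy
      exact ⟨u, ⟨hu, hus⟩, hyu⟩
    · rintro y ⟨u, ⟨_, hus⟩, hyu⟩
      exact hus hyu
  rw [hs]
  exact TopologicalSpace.GenerateOpen.sUnion _ fun u hu => hu.1

theorem totallyBelow_balls_generate_same_topology {Q : Type*} [Monoid Q]
    [CompleteLattice Q] [IsQuantale Q]
    (hpc : ∀ y : Q, y = sSup {x : Q | totallyBelow x y})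
    {X : Type*} (d : X → X → Q)
    (hrefl : ∀ x : X, (1 : Q) ≤ d x x)
    (htri : ∀ x y z : X, d x y * d y z ≤ d x z) :
    TopologicalSpace.generateFrom
        {B : Set X | ∃ x δ, totallyBelow δ (1 : Q) ∧ B = {y : X | totallyBelow δ (d x y)}} =
      TopologicalSpace.generateFrom
        {B : Set X | ∃ x δ, wayBelow δ (1 : Q) ∧ B = {y : X | wayBelow δ (d x y)}} := by
  classical
  set ST : Set (Set X) :=
    {B : Set X | ∃ x δ, totallyBelow δ (1 : Q) ∧ B = {y : X | totallyBelow δ (d x y)}} with hST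
  set SW : Set (Set X) :=
    {B : Set X | ∃ x δ, wayBelow δ (1 : Q) ∧ B = {y : X | wayBelow δ (d x y)}} with hSW
  have key : ∀ s ∈ SW, TopologicalSpace.GenerateOpen ST s := by
    rintro _ ⟨x, δ, hδ, rfl⟩
    refine generateOpen_of_nbhd _ _ fun y hy => ?_
    -- hy : wayBelow δ (d x y)
    obtain ⟨F, hF, hδF⟩ := wb_key hpc hy
    refine ⟨⋂ ε ∈ F, {z : X | totallyBelow ε (d y z)}, ?_, ?_, ?_⟩
    · exact generateOpen_biInter ST F (fun ε => {z : X | totallyBelow ε (d y z)})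
        fun ε hε => ⟨y, ε, hF ε hε, rfl⟩
    · simp only [Set.mem_iInter, Set.mem_setOf_eq]
      exact fun ε hε => tb_mono_right (hF ε hε) (hrefl y)
    · intro z hz
      simp only [Set.mem_iInter, Set.mem_setOf_eq] at hz
      have hsup : F.sup id ≤ d y z := Finset.sup_le fun ε hε => tb_le (hz ε hε)
      have : d x y * F.sup id ≤ d x z :=
        le_trans (mul_le_mul_right hsup _) (htri x y z)
      exact wb_mono_right hδF this
  have key' : ∀ s ∈ ST, TopologicalSpace.GenerateOpen SW s := by
    rintro _ ⟨x, δ, hδ, rfl⟩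
    refine generateOpen_of_nbhd _ _ fun y hy => ?_
    -- hy : totallyBelow δ (d x y)
    obtain ⟨ε, hε, hδε⟩ := tb_key hpc hy
    refine ⟨{z : X | wayBelow ε (d y z)}, TopologicalSpace.GenerateOpen.basic _
      ⟨y, ε, tb_wb hε, rfl⟩, ?_, ?_⟩
    · exact wb_mono_right (tb_wb hε) (hrefl y)
    · intro z hz
      have : d x y * ε ≤ d x z :=
        le_trans (mul_le_mul_right (wb_le hz) _) (htri x y z)
      exact tb_mono_right hδε this
  exact le_antisymm (le_generateFrom fun s hs => key s hs)
    (le_generateFrom fun s hs => key' s hs)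
end
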